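/- arXiv:2307.15618 — 2 statements merged into one kernel-verified Lean document; each statement's English description precedes it below -/
import Mathlib

section
/- For 1 < p < N, the best constant in the critical Sobolev embedding satisfies S_{N,p} = N ω_N^{p/N} ((N-p)/(p-1))^{p-1} (Γ(N/p) Γ(1+N−N/p)/Γ(N))^{p/N}, and lim_{p→1⁺} S_{N,p} = N ω_N^{1/N}, where ω_N = π^{N/2}/Γ(1+N/2) is the volume of the unit ball in ℝ^N. -/
open MeasureTheory Filter Topology Real Set ENNReal

noncomputable section

abbrev Euc (N : ℕ) := EuclideanSpace ℝ (Fin N)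

/-- Divergence of a vector field on `ℝ^N`. -/
def divg {N : ℕ} (φ : Euc N → Euc N) (x : Euc N) : ℝ :=
  ∑ i, fderiv ℝ φ x (EuclideanSpace.single i (1:ℝ)) i

/-- Total variation `|Du|(U)` of a function `u` over an open set `U`. -/
def totalVar {N : ℕ} (U : Set (Euc N)) (u : Euc N → ℝ) : ℝ≥0∞ :=
  sSup {r : ℝ≥0∞ | ∃ φ : Euc N → Euc N, ContDiff ℝ 1 φ ∧ HasCompactSupport φ ∧
    tsupport φ ⊆ U ∧ (∀ x, ‖φ x‖ ≤ 1) ∧ r = ENNReal.ofReal (∫ x in U, u x * divg φ x)}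

/-- Perimeter of a set in `ℝ^N`. -/
def perim {N : ℕ} (E : Set (Euc N)) : ℝ≥0∞ :=
  totalVar Set.univ (Set.indicator E (fun _ => (1:ℝ)))

/-- The Cheeger constant of `Ω`. -/
def cheeger {N : ℕ} (Ω : Set (Euc N)) : ℝ :=
  sInf {r : ℝ | ∃ E : Set (Euc N), E ⊆ closure Ω ∧ 0 < volume E ∧
    r = (perim E).toReal / (volume E).toReal}

/-- The Sobolev-type constant `λ_{p,q}(Ω)`. -/
def lam {N : ℕ} (Ω : Set (Euc N)) (p q : ℝ) : ℝ :=
  sInf {r : ℝ | ∃ u : Euc N → ℝ, ContDiff ℝ 1 u ∧ HasCompactSupport u ∧ tsupport u ⊆ Ω ∧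
    (∫ x in Ω, |u x| ^ q) = 1 ∧ r = ∫ x in Ω, ‖fderiv ℝ u x‖ ^ p}

/-- sup-norm over `Ω`. -/
def supn {N : ℕ} (Ω : Set (Euc N)) (u : Euc N → ℝ) : ℝ := sSup (u '' Ω)

/-- `u` is a weak solution of `-div(|∇u|^{p-2}∇u) = f(u)` in `Ω`. -/
def IsWeakSol {N : ℕ} (Ω : Set (Euc N)) (p : ℝ) (f : ℝ → ℝ) (u : Euc N → ℝ) : Prop :=
  ∀ φ : Euc N → ℝ, ContDiff ℝ 1 φ → HasCompactSupport φ → tsupport φ ⊆ Ω →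
    (∫ x in Ω, ‖gradient u x‖ ^ (p - 2) * (inner ℝ (gradient u x) (gradient φ x) : ℝ)) =
      ∫ x in Ω, f (u x) * φ x

/-- the explicit critical Sobolev constant tends to `N ω_N^{1/N}` as `p → 1⁺`. -/
theorem stmt1 {N : ℕ} (hN : 2 ≤ N) :
    Tendsto (fun p : ℝ =>
      (N : ℝ) * (π ^ ((N : ℝ) / 2) / Real.Gamma (1 + (N : ℝ) / 2)) ^ (p / N) *
        (((N : ℝ) - p) / (p - 1)) ^ (p - 1) *
        (Real.Gamma ((N : ℝ) / p) * Real.Gamma (1 + (N : ℝ) - (N : ℝ) / p) /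
          Real.Gamma (N : ℝ)) ^ (p / N))
      (𝓝[>] (1:ℝ))
      (𝓝 ((N : ℝ) * (π ^ ((N : ℝ) / 2) / Real.Gamma (1 + (N : ℝ) / 2)) ^ ((1:ℝ) / N))) := by
  have hN2 : (2:ℝ) ≤ (N:ℝ) := by exact_mod_cast hN
  have hNpos : (0:ℝ) < N := by linarith
  set ω : ℝ := π ^ ((N : ℝ) / 2) / Real.Gamma (1 + (N : ℝ) / 2) with hω
  have hωpos : 0 < ω := by
    apply div_pos (rpow_pos_of_pos pi_pos _)
    exact Real.Gamma_pos_of_pos (by positivity)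
  -- p ↦ p tends to 1 (within >1)
  have hid : Tendsto (fun p : ℝ => p) (𝓝[>] (1:ℝ)) (𝓝 1) :=
    tendsto_id.mono_left nhdsWithin_le_nhds
  have hdiv : Tendsto (fun p : ℝ => p / N) (𝓝[>] (1:ℝ)) (𝓝 (1 / N)) :=
    hid.div_const _
  -- factor 1
  have h1 : Tendsto (fun p : ℝ => (N:ℝ) * ω ^ (p / N)) (𝓝[>] (1:ℝ))
      (𝓝 ((N:ℝ) * ω ^ ((1:ℝ) / N))) :=
    tendsto_const_nhds.mul ((continuousAt_const_rpow hωpos.ne').tendsto.comp hdiv)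
  -- factor 2 : ((N-p)/(p-1))^(p-1) → 1
  have hsub : Tendsto (fun p : ℝ => p - 1) (𝓝[>] (1:ℝ)) (𝓝[>] 0) := by
    apply tendsto_nhdsWithin_of_tendsto_nhds_of_eventually_within
    · simpa using (hid.sub_const 1)
    · filter_upwards [self_mem_nhdsWithin] with p hp
      exact sub_pos.mpr (mem_Ioi.mp hp)
  have hlogself : Tendsto (fun p : ℝ => Real.log (p - 1) * (p - 1)) (𝓝[>] (1:ℝ)) (𝓝 0) := by
    have := (tendsto_log_mul_rpow_nhdsGT_zero (zero_lt_one)).comp hsub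
    simpa [Function.comp_def, Real.rpow_one] using this
  have hlogNp : Tendsto (fun p : ℝ => (p - 1) * Real.log ((N:ℝ) - p)) (𝓝[>] (1:ℝ)) (𝓝 0) := by
    have hc : Tendsto (fun p : ℝ => Real.log ((N:ℝ) - p)) (𝓝[>] (1:ℝ)) (𝓝 (Real.log ((N:ℝ) - 1))) := by
      exact ((Real.continuousAt_log (by linarith)).comp
        (by fun_prop : ContinuousAt (fun p : ℝ => (N:ℝ) - p) 1)).tendsto.comp hid
    simpa using ((hid.sub_const 1).mul hc)
  have h2 : Tendsto (fun p : ℝ => (((N : ℝ) - p) / (p - 1)) ^ (p - 1)) (𝓝[>] (1:ℝ)) (𝓝 1) := by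
    have key : Tendsto (fun p : ℝ =>
        Real.exp ((p - 1) * Real.log ((N:ℝ) - p) - Real.log (p - 1) * (p - 1)))
        (𝓝[>] (1:ℝ)) (𝓝 1) := by
      have := (hlogNp.sub hlogself).const_smul (1:ℝ)
      have h := Real.continuous_exp.continuousAt.tendsto.comp (hlogNp.sub hlogself)
      simpa [Function.comp_def] using h
    apply key.congr'
    have hmem : Ioo (1:ℝ) 2 ∈ 𝓝[>] (1:ℝ) :=
      Ioo_mem_nhdsGT_of_mem (by norm_num : (1:ℝ) ∈ Ico (1:ℝ) 2)
    filter_upwards [hmem] with p hp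
    have h1p : 0 < p - 1 := by linarith [hp.1]
    have h2p : 0 < (N:ℝ) - p := by linarith [hp.2]
    rw [Real.rpow_def_of_pos (div_pos h2p h1p), Real.log_div h2p.ne' h1p.ne']
    ring_nf
  -- factor 3
  have hGammaCt : ∀ x : ℝ, 0 < x → ContinuousAt Real.Gamma x := by
    intro x hx
    refine (Real.differentiableAt_Gamma ?_).continuousAt
    intro m
    have hm : (0:ℝ) ≤ m := Nat.cast_nonneg m
    exact ne_of_gt (by linarith)
  have hbase : Tendsto (fun p : ℝ =>
      Real.Gamma ((N : ℝ) / p) * Real.Gamma (1 + (N : ℝ) - (N : ℝ) / p) / Real.Gamma (N : ℝ))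
      (𝓝[>] (1:ℝ)) (𝓝 1) := by
    have hq : Tendsto (fun p : ℝ => (N:ℝ) / p) (𝓝[>] (1:ℝ)) (𝓝 (N:ℝ)) := by
      have : Tendsto (fun p : ℝ => (N:ℝ) / p) (𝓝 (1:ℝ)) (𝓝 ((N:ℝ)/1)) :=
        (tendsto_const_nhds.div tendsto_id one_ne_zero)
      simpa using this.mono_left nhdsWithin_le_nhds
    have hg1 : Tendsto (fun p : ℝ => Real.Gamma ((N:ℝ)/p)) (𝓝[>] (1:ℝ)) (𝓝 (Real.Gamma (N:ℝ))) :=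
      (hGammaCt _ hNpos).tendsto.comp hq
    have hg2 : Tendsto (fun p : ℝ => Real.Gamma (1 + (N:ℝ) - (N:ℝ)/p)) (𝓝[>] (1:ℝ))
        (𝓝 (Real.Gamma 1)) := by
      have harg : Tendsto (fun p : ℝ => 1 + (N:ℝ) - (N:ℝ)/p) (𝓝[>] (1:ℝ)) (𝓝 1) := by
        have := (tendsto_const_nhds (x := 1 + (N:ℝ)) (f := 𝓝[>] (1:ℝ))).sub hq
        simpa using this
      exact (hGammaCt 1 one_pos).tendsto.comp harg
    have hΓN : Real.Gamma (N:ℝ) ≠ 0 := (Real.Gamma_pos_of_pos hNpos).ne'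
    have := (hg1.mul hg2).div_const (Real.Gamma (N:ℝ))
    simpa [Real.Gamma_one, hΓN] using this
  have h3 : Tendsto (fun p : ℝ =>
      (Real.Gamma ((N : ℝ) / p) * Real.Gamma (1 + (N : ℝ) - (N : ℝ) / p) /
        Real.Gamma (N : ℝ)) ^ (p / N)) (𝓝[>] (1:ℝ)) (𝓝 1) := by
    have := hbase.rpow hdiv (Or.inl one_ne_zero)
    simpa using this
  have := (h1.mul h2).mul h3
  simpa using this
end
end

section
/- Picone-type energy comparison: let Ω be bounded smooth, 1 < p < N, p < q < Np/(N−p), let w ∈ W_0^{1,p}(Ω) be a positive weak solution of −div(|∇w|^{p−2}∇w) = w^{q−1}, and let e_p be the L^∞-normalized first Dirichlet p-Laplacian eigenfunction with eigenvalue λ_{p,p}. Then ∫_Ω w^{q−p} e_p^p dx ≤ λ_{p,p} ∫_Ω e_p^p dx; in particular ‖w‖_∞^{q−p} ∫_Ω (w/‖w‖_∞)^{q−p} e_p^p dx ≤ λ_{p,p} ∫_Ω e_p^p dx. -/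
open MeasureTheory Filter Topology Real Set ENNReal

noncomputable section

namespace Stmt17Aux
open intervalIntegral

open intervalIntegral


/-- smooth ramp: 0 for `t ≤ s`, 1 for `t ≥ 2s`. -/
def th (s t : ℝ) : ℝ := Real.smoothTransition (t / s - 1)

lemma th_cont (s : ℝ) : Continuous (th s) :=
  Real.smoothTransition.continuous.comp (by continuity)

lemma th_nonneg (s t : ℝ) : 0 ≤ th s t := Real.smoothTransition.nonneg _
lemma th_le_one (s t : ℝ) : th s t ≤ 1 := Real.smoothTransition.le_one _

lemma th_zero {s t : ℝ} (hs : 0 < s) (h : t ≤ s) : th s t = 0 :=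
  Real.smoothTransition.zero_of_nonpos (by
    rw [sub_nonpos, div_le_one hs]; exact h)

lemma th_one {s t : ℝ} (hs : 0 < s) (h : 2 * s ≤ t) : th s t = 1 :=
  Real.smoothTransition.one_of_one_le (by
    rw [le_sub_iff_add_le, le_div_iff₀ hs]; linarith)

lemma th_pos {s t : ℝ} (hs : 0 < s) (h : s < t) : 0 < th s t :=
  Real.smoothTransition.pos_of_pos (by
    rw [sub_pos, lt_div_iff₀ hs]; linarith)

/-- a C¹ ramp: 0 for `t ≤ s`, slope in `[0,1]`, equal to `t - c` for `t ≥ 2s`. -/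
def sg (s t : ℝ) : ℝ := ∫ u in (0:ℝ)..t, th s u

lemma sg_hasDerivAt (s t : ℝ) : HasDerivAt (sg s) (th s t) t :=
  intervalIntegral.integral_hasDerivAt_right
    ((th_cont s).intervalIntegrable _ _)
    ((th_cont s).stronglyMeasurableAtFilter _ _)
    (th_cont s).continuousAt

lemma sg_zero {s t : ℝ} (hs : 0 < s) (h : t ≤ s) : sg s t = 0 := by
  have : ∀ u ∈ Set.uIcc (0:ℝ) t, th s u = 0 := by
    intro u hu
    rcases le_total t 0 with h0 | h0
    · rw [Set.uIcc_of_ge h0] at hu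
      exact th_zero hs (hu.2.trans hs.le)
    · rw [Set.uIcc_of_le h0] at hu
      exact th_zero hs (hu.2.trans h)
  rw [sg, intervalIntegral.integral_congr this, intervalIntegral.integral_zero]

lemma sg_nonneg {s : ℝ} (hs : 0 < s) (t : ℝ) : 0 ≤ sg s t := by
  rcases le_total t 0 with h0 | h0
  · rw [sg_zero hs (h0.trans hs.le)]
  · exact intervalIntegral.integral_nonneg h0 fun u _ => th_nonneg s u

lemma sg_le_max {s : ℝ} (hs : 0 < s) (t : ℝ) : sg s t ≤ max t 0 := by
  rcases le_total t 0 with h0 | h0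
  · rw [sg_zero hs (h0.trans hs.le)]; exact le_max_right _ _
  · refine le_trans ?_ (le_max_left _ _)
    have h1 : sg s t ≤ ∫ u in (0:ℝ)..t, (1:ℝ) :=
      intervalIntegral.integral_mono_on h0 ((th_cont s).intervalIntegrable _ _)
        intervalIntegrable_const (fun u _ => th_le_one s u)
    simpa using h1

/-- sharper bound near `s`. -/
lemma sg_le_sub {s : ℝ} (hs : 0 < s) (t : ℝ) : sg s t ≤ max (t - s) 0 := by
  rcases le_total t s with h0 | h0
  · rw [sg_zero hs h0]; exact le_max_right _ _
  · have key : sg s t = ∫ u in s..t, th s u := by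
      have : sg s t = sg s s + ∫ u in s..t, th s u := by
        rw [sg, sg, intervalIntegral.integral_add_adjacent_intervals] <;>
          exact (th_cont s).intervalIntegrable _ _
      rw [this, sg_zero hs le_rfl, zero_add]
    refine le_trans ?_ (le_max_left _ _)
    rw [key]
    have h1 : (∫ u in s..t, th s u) ≤ ∫ u in s..t, (1:ℝ) :=
      intervalIntegral.integral_mono_on h0 ((th_cont s).intervalIntegrable _ _)
        intervalIntegrable_const (fun u _ => th_le_one s u)
    simpa using h1

lemma sg_ge {s : ℝ} (hs : 0 < s) (t : ℝ) : t - 2 * s ≤ sg s t := by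
  rcases le_total t (2 * s) with h0 | h0
  · exact le_trans (by linarith) (sg_nonneg hs t)
  · have key : sg s t = sg s (2 * s) + ∫ u in (2*s)..t, th s u := by
      rw [sg, sg, intervalIntegral.integral_add_adjacent_intervals] <;>
        exact (th_cont s).intervalIntegrable _ _
    have h1 : (∫ u in (2*s)..t, th s u) = ∫ u in (2*s)..t, (1:ℝ) := by
      refine intervalIntegral.integral_congr fun u hu => ?_
      rw [Set.uIcc_of_le h0] at hu
      exact th_one hs hu.1
    rw [key, h1]
    have := sg_nonneg hs (2 * s)
    simp only [intervalIntegral.integral_const, smul_eq_mul, mul_one]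
    linarith

lemma sg_pos {s t : ℝ} (hs : 0 < s) (h : s < t) : 0 < sg s t := by
  have key : sg s t = sg s s + ∫ u in s..t, th s u := by
    rw [sg, sg, intervalIntegral.integral_add_adjacent_intervals] <;>
      exact (th_cont s).intervalIntegrable _ _
  rw [key, sg_zero hs le_rfl, zero_add]
  exact intervalIntegral.intervalIntegral_pos_of_pos_on
    ((th_cont s).intervalIntegrable _ _) (fun u hu => th_pos hs hu.1) h

lemma sg_contDiff (s : ℝ) : ContDiff ℝ 1 (sg s) := by
  rw [contDiff_one_iff_deriv]
  constructor
  · exact fun t => (sg_hasDerivAt s t).differentiableAt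
  · have : deriv (sg s) = th s := funext fun t => (sg_hasDerivAt s t).deriv
    rw [this]; exact th_cont s

section Rho
variable {p s : ℝ}

lemma rho_hasDerivAt (hp : 1 < p) (hs : 0 < s) (t : ℝ) :
    HasDerivAt (fun u => sg s u ^ p) (p * sg s t ^ (p - 1) * th s t) t := by
  rcases lt_or_ge s t with h | h
  · -- sg s t > 0
    have hpos := sg_pos hs h
    have h1 : HasDerivAt (fun y : ℝ => y ^ p) (p * sg s t ^ (p - 1)) (sg s t) :=
      Real.hasDerivAt_rpow_const (Or.inl hpos.ne')
    exact h1.comp t (sg_hasDerivAt s t)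
  · -- t ≤ s : sg s t = 0, th could be 0
    have hsg0 : sg s t = 0 := sg_zero hs h
    have hth0 : th s t = 0 := th_zero hs h
    rw [hsg0, hth0, mul_zero]
    rcases lt_or_eq_of_le h with hlt | heq
    · -- locally zero
      have hev : (fun u => sg s u ^ p) =ᶠ[nhds t] fun _ => (0:ℝ)^p := by
        filter_upwards [eventually_lt_nhds hlt] with u hu
        rw [sg_zero hs hu.le]
      exact (hasDerivAt_const t ((0:ℝ)^p)).congr_of_eventuallyEq hev
    · -- t = s : little-o estimate
      subst heq
      rw [hasDerivAt_iff_isLittleO, Asymptotics.isLittleO_iff]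
      intro c hc
      have hδ : (0:ℝ) < c ^ (1 / (p - 1)) := Real.rpow_pos_of_pos hc _
      filter_upwards [Metric.ball_mem_nhds t hδ] with u hu
      rw [Metric.mem_ball, Real.dist_eq] at hu
      have hb : 0 ≤ sg t u := sg_nonneg hs u
      have hb2 : sg t u ≤ |u - t| := le_trans (sg_le_sub hs u) (by
        rcases le_total (u - t) 0 with h'|h'
        · simpa [max_eq_right h'] using abs_nonneg (u - t)
        · rw [max_eq_left h']; exact le_abs_self _)
      have hss : sg t t = 0 := sg_zero hs le_rfl
      simp only [hss, smul_zero, sub_zero]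
      have h0p : (0:ℝ) ^ p = 0 := Real.zero_rpow (by positivity)
      rw [h0p, sub_zero]
      have key : sg t u ^ p ≤ |u - t| ^ (p - 1) * |u - t| := by
        have h1 : sg t u ^ p ≤ |u - t| ^ p :=
          Real.rpow_le_rpow hb hb2 (by positivity)
        have h2 : |u - t| ^ p = |u - t| ^ (p - 1) * |u - t| := by
          rw [← Real.rpow_add_one' (abs_nonneg _)
            (by intro h0; rw [sub_add_cancel] at h0; exact absurd h0 (by positivity))]
          norm_num
        rw [← h2]; exact h1
      have hnn : 0 ≤ sg t u ^ p := Real.rpow_nonneg hb _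
      rw [Real.norm_eq_abs, abs_of_nonneg hnn, Real.norm_eq_abs]
      refine key.trans ?_
      have hle : |u - t| ^ (p - 1) ≤ c := by
        have h3 : |u - t| ^ (p - 1) ≤ (c ^ (1 / (p-1))) ^ (p - 1) :=
          Real.rpow_le_rpow (abs_nonneg _) hu.le (by linarith)
        have h4 : (c ^ (1 / (p-1))) ^ (p - 1) = c := by
          rw [← Real.rpow_mul hc.le, one_div, inv_mul_cancel₀ (by linarith : p - 1 ≠ 0),
            Real.rpow_one]
        rw [h4] at h3; exact h3
      exact mul_le_mul_of_nonneg_right hle (abs_nonneg _)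

end Rho


lemma measurable_rpow_const (c : ℝ) : Measurable fun x : ℝ => x ^ c := by
  have h : (fun x : ℝ => x ^ c) = fun x =>
      if x = 0 then (0:ℝ) ^ c
      else if 0 < x then Real.exp (Real.log x * c)
      else Real.exp (Real.log x * c) * Real.cos (c * π) := by
    funext x
    split_ifs with h1 h2
    · rw [h1]
    · rw [Real.rpow_def_of_pos h2]
    · push_neg at h2
      rw [Real.rpow_def_of_neg (lt_of_le_of_ne h2 h1)]
  rw [h]
  refine Measurable.ite (measurableSet_eq_fun measurable_id measurable_const)
    measurable_const ?_
  exact Measurable.ite (measurableSet_lt measurable_const measurable_id)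
    (Real.measurable_exp.comp ((Real.measurable_log.mul_const c)))
    ((Real.measurable_exp.comp ((Real.measurable_log.mul_const c))).mul measurable_const)

/-- the key pointwise Picone–Young inequality -/
lemma young_picone {p S T G W E ip : ℝ} (hp : 1 < p) (hS : 0 ≤ S) (hT : 0 ≤ T)
    (hT1 : T ≤ 1) (hG : 0 < G) (hE : 0 ≤ E) (hW : 0 ≤ W) (hip : |ip| ≤ E * W) :
    W ^ (p - 2) * (S ^ p * ((1 - p) * G ^ (-p)) * W ^ (2:ℕ)
      + G ^ (1 - p) * (p * S ^ (p - 1) * T) * ip) ≤ T * E ^ p := by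
  have hTE : 0 ≤ T * E ^ p := mul_nonneg hT (Real.rpow_nonneg hE _)
  rcases eq_or_lt_of_le hW with hW0 | hWpos
  · rw [← hW0]
    have hip0 : ip = 0 := by
      rw [← hW0] at hip
      simp only [mul_zero] at hip
      exact abs_eq_zero.mp (le_antisymm hip (abs_nonneg _))
    rw [hip0]
    norm_num
    exact hTE
  · -- W > 0
    have hp0 : (0:ℝ) < p := by linarith
    set X := S / G * W with hX
    have hXnn : 0 ≤ X := by positivity
    have hW2 : W ^ (p - 2) * W ^ (2:ℕ) = W ^ p := by
      rw [← Real.rpow_natCast W 2, ← Real.rpow_add hWpos]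
      norm_num
    have hW1 : W ^ (p - 2) * W = W ^ (p - 1) := by
      nth_rewrite 2 [← Real.rpow_one W]
      rw [← Real.rpow_add hWpos]
      congr 1
      ring
    have hXp : X ^ p = S ^ p * G ^ (-p) * W ^ p := by
      rw [hX, Real.mul_rpow (by positivity) hW, Real.div_rpow hS hG.le,
        Real.rpow_neg hG.le, div_eq_mul_inv]
    have hXp1 : X ^ (p - 1) = S ^ (p - 1) * G ^ (1 - p) * W ^ (p - 1) := by
      rw [hX, Real.mul_rpow (by positivity) hW, Real.div_rpow hS hG.le,
        div_eq_mul_inv, ← Real.rpow_neg hG.le, neg_sub]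
    -- Young's inequality
    have young : p * (X ^ (p - 1) * E) ≤ (p - 1) * X ^ p + E ^ p := by
      have hw1 : (0:ℝ) ≤ (p - 1) / p := div_nonneg (by linarith) hp0.le
      have hw2 : (0:ℝ) ≤ 1 / p := by positivity
      have hsum : (p - 1) / p + 1 / p = 1 := by field_simp; ring
      have hgm := Real.geom_mean_le_arith_mean2_weighted hw1 hw2
        (Real.rpow_nonneg hXnn p) (Real.rpow_nonneg hE p) hsum
      have h1 : (X ^ p) ^ ((p - 1) / p) = X ^ (p - 1) := by
        rw [← Real.rpow_mul hXnn]
        congr 1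
        field_simp
      have h2 : (E ^ p) ^ (1 / p : ℝ) = E := by
        rw [← Real.rpow_mul hE, mul_one_div, div_self hp0.ne', Real.rpow_one]
      rw [h1, h2] at hgm
      have := mul_le_mul_of_nonneg_left hgm hp0.le
      calc p * (X ^ (p - 1) * E) ≤ p * ((p - 1) / p * X ^ p + 1 / p * E ^ p) := this
      _ = (p - 1) * X ^ p + E ^ p := by field_simp
    -- bound the inner product term
    have hcoef : 0 ≤ G ^ (1 - p) * (p * S ^ (p - 1) * T) * W ^ (p - 2) :=
      mul_nonneg (mul_nonneg (Real.rpow_nonneg hG.le _)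
        (mul_nonneg (mul_nonneg hp0.le (Real.rpow_nonneg hS _)) hT))
        (Real.rpow_nonneg hW _)
    have hip' : ip ≤ E * W := le_trans (le_abs_self _) hip
    have key : W ^ (p - 2) * (G ^ (1 - p) * (p * S ^ (p - 1) * T) * ip)
        ≤ T * (p * (X ^ (p - 1) * E)) := by
      have step1 : W ^ (p - 2) * (G ^ (1 - p) * (p * S ^ (p - 1) * T) * ip)
          ≤ W ^ (p - 2) * (G ^ (1 - p) * (p * S ^ (p - 1) * T) * (E * W)) := by
        refine mul_le_mul_of_nonneg_left ?_ (Real.rpow_nonneg hW _)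
        refine mul_le_mul_of_nonneg_left hip' ?_
        exact mul_nonneg (Real.rpow_nonneg hG.le _)
          (mul_nonneg (mul_nonneg hp0.le (Real.rpow_nonneg hS _)) hT)
      refine step1.trans ?_
      have : W ^ (p - 2) * (G ^ (1 - p) * (p * S ^ (p - 1) * T) * (E * W))
          = T * (p * (S ^ (p-1) * G ^ (1-p) * (W ^ (p - 2) * W) * E)) := by ring
      rw [this, hW1, hXp1]
    have hXpnn : 0 ≤ X ^ p := Real.rpow_nonneg hXnn _
    -- put everything together
    have expand : W ^ (p - 2) * (S ^ p * ((1 - p) * G ^ (-p)) * W ^ (2:ℕ)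
        + G ^ (1 - p) * (p * S ^ (p - 1) * T) * ip)
        = (1 - p) * (S ^ p * G ^ (-p) * (W ^ (p-2) * W ^ (2:ℕ)))
          + W ^ (p - 2) * (G ^ (1 - p) * (p * S ^ (p - 1) * T) * ip) := by ring
    rw [expand, hW2, ← hXp]
    have young' : T * (p * (X ^ (p - 1) * E)) ≤ T * ((p - 1) * X ^ p + E ^ p) :=
      mul_le_mul_of_nonneg_left young hT
    have hXpnn0 : 0 ≤ X ^ p := Real.rpow_nonneg hXnn _
    have final : T * ((p - 1) * X ^ p + E ^ p) ≤ (p - 1) * X ^ p + T * E ^ p := by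
      have : T * ((p - 1) * X ^ p) ≤ 1 * ((p - 1) * X ^ p) :=
        mul_le_mul_of_nonneg_right hT1 (mul_nonneg (by linarith) hXpnn0)
      nlinarith
    nlinarith [key.trans (young'.trans final)]




variable {N : ℕ}

lemma contDiff_glue {f : Euc N → ℝ} {U V : Set (Euc N)} (hU : IsOpen U) (hV : IsOpen V)
    (hUV : ∀ x, x ∈ U ∨ x ∈ V) (h0 : ∀ x ∈ U, f x = 0) (hf : ContDiffOn ℝ 1 f V) :
    ContDiff ℝ 1 f := by
  rw [contDiff_iff_contDiffAt]
  intro x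
  rcases hUV x with hx | hx
  · exact ContDiffAt.congr_of_eventuallyEq contDiffAt_const
      (Filter.eventually_of_mem (hU.mem_nhds hx) h0)
  · exact hf.contDiffAt (hV.mem_nhds hx)

lemma continuous_glue {f : Euc N → ℝ} {U V : Set (Euc N)} (hU : IsOpen U) (hV : IsOpen V)
    (hUV : ∀ x, x ∈ U ∨ x ∈ V) (h0 : ∀ x ∈ U, f x = 0) (hf : ContinuousOn f V) :
    Continuous f := by
  rw [continuous_iff_continuousAt]
  intro x
  rcases hUV x with hx | hx
  · have : f =ᶠ[nhds x] fun _ => (0:ℝ) := Filter.eventually_of_mem (hU.mem_nhds hx) h0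
    exact ContinuousAt.congr continuousAt_const this.symm
  · exact hf.continuousAt (hV.mem_nhds hx)

lemma continuous_of_closure {Ω : Set (Euc N)} (hΩo : IsOpen Ω) {f : Euc N → ℝ}
    (hc : ContinuousOn f (closure Ω)) (h0 : ∀ x ∉ Ω, f x = 0) : Continuous f := by
  rw [continuous_iff_continuousAt]
  intro x
  by_cases hx : x ∈ Ω
  · exact (hc.mono subset_closure).continuousAt (hΩo.mem_nhds hx)
  · have h1 : ContinuousWithinAt f (closure Ω) x := by
      by_cases hx2 : x ∈ closure Ω
      · exact hc x hx2
      · exact continuousWithinAt_of_notMem_closure (by rwa [closure_closure])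
    have h2 : ContinuousWithinAt f Ωᶜ x := by
      refine (continuousWithinAt_const (b := (0:ℝ))).congr (fun y hy => h0 y hy) (h0 x hx)
    have h3 := h1.union h2
    have huniv : closure Ω ∪ Ωᶜ = univ := by
      apply eq_univ_iff_forall.mpr
      intro y
      by_cases hy : y ∈ Ω
      · exact Or.inl (subset_closure hy)
      · exact Or.inr hy
    rwa [huniv, continuousWithinAt_univ] at h3

lemma integrableOn_of_bdd {Ω : Set (Euc N)} (hΩo : IsOpen Ω) (hΩb : Bornology.IsBounded Ω)
    {f : Euc N → ℝ} (hf : Continuous f) {C : ℝ} (hC : ∀ x ∈ Ω, |f x| ≤ C) :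
    IntegrableOn f Ω (volume : Measure (Euc N)) := by
  have hvol : volume Ω < ⊤ := hΩb.measure_lt_top
  refine Integrable.mono' (g := fun _ => C) ?_ hf.aestronglyMeasurable.restrict ?_
  · exact integrableOn_const hvol.ne
  · exact (ae_restrict_iff' hΩo.measurableSet).2 (ae_of_all _ (fun x hx => by
      simpa using hC x hx))

lemma inner_grad {f : Euc N → ℝ} (x v : Euc N) :
    (inner ℝ (gradient f x) v : ℝ) = fderiv ℝ f x v := by
  show (inner ℝ ((InnerProductSpace.toDual ℝ (Euc N)).symm (fderiv ℝ f x)) v : ℝ) = _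
  exact InnerProductSpace.toDual_symm_apply

lemma gradient_zero_of_nmem_tsupport {φ : Euc N → ℝ} {x : Euc N} (hx : x ∉ tsupport φ) :
    gradient φ x = 0 := by
  have h1 : fderiv ℝ φ x = 0 := by
    by_contra h
    exact hx (support_fderiv_subset ℝ (by simpa [Function.mem_support] using h))
  show (InnerProductSpace.toDual ℝ (Euc N)).symm (fderiv ℝ φ x) = 0
  rw [h1]
  simp


lemma rho_contDiff {p s : ℝ} (hp : 1 < p) (hs : 0 < s) :
    ContDiff ℝ 1 (fun t => sg s t ^ p) := by
  rw [contDiff_one_iff_deriv]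
  have hd : ∀ t, HasDerivAt (fun u => sg s u ^ p) (p * sg s t ^ (p - 1) * th s t) t :=
    rho_hasDerivAt hp hs
  constructor
  · exact fun t => (hd t).differentiableAt
  · have hder : deriv (fun u => sg s u ^ p) = fun t => p * sg s t ^ (p - 1) * th s t :=
      funext fun t => (hd t).deriv
    rw [hder]
    have hcsg : Continuous (fun t => sg s t ^ (p - 1)) :=
      ((sg_contDiff s).continuous).rpow_const (fun t => Or.inr (by linarith))
    exact (continuous_const.mul hcsg).mul (th_cont s)

end Stmt17Aux

namespace Stmt17Aux

variable {N : ℕ}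

lemma key_estimate {Ω : Set (Euc N)} (hΩo : IsOpen Ω) (hΩb : Bornology.IsBounded Ω)
    {p q a lam0 : ℝ} (hp : 1 < p) (hpq : p < q) (ha : 0 < a) (hlam0 : 0 ≤ lam0)
    {w : Euc N → ℝ} (hwreg : ContDiffOn ℝ 1 w (closure Ω))
    (hw0 : ∀ x ∉ Ω, w x = 0) (hwpos : ∀ x ∈ Ω, 0 < w x)
    (hwsol : IsWeakSol Ω p (fun t => t ^ (q - 1)) w)
    {e : Euc N → ℝ} (hereg : ContDiffOn ℝ 1 e (closure Ω))
    (he0 : ∀ x ∉ Ω, e x = 0) (hepos : ∀ x ∈ Ω, 0 < e x)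
    (hesol : IsWeakSol Ω p (fun t => lam0 * t ^ (p - 1)) e) :
    (∫ x in Ω, w x ^ (q - 1) * (sg a (e x) ^ p * (w x + a) ^ (1 - p))) ≤
      lam0 * ∫ x in Ω, e x ^ p := by
  have hecont : Continuous e := continuous_of_closure hΩo hereg.continuousOn he0
  have hwcont : Continuous w := continuous_of_closure hΩo hwreg.continuousOn hw0
  have hwnn : ∀ x, 0 ≤ w x := by
    intro x; by_cases hx : x ∈ Ω
    · exact (hwpos x hx).le
    · rw [hw0 x hx]
  have henn : ∀ x, 0 ≤ e x := by
    intro x; by_cases hx : x ∈ Ω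
    · exact (hepos x hx).le
    · rw [he0 x hx]
  -- the compact set where test functions live
  set K : Set (Euc N) := {x | a ≤ e x} with hK
  have hKΩ : K ⊆ Ω := by
    intro x hx
    by_contra hxn
    have := he0 x hxn
    simp only [hK, mem_setOf_eq] at hx
    linarith
  have hKcl : IsClosed K := isClosed_le continuous_const hecont
  have hKcomp : IsCompact K :=
    Metric.isCompact_of_isClosed_isBounded hKcl (hΩb.subset hKΩ)
  -- the open set where test functions vanish
  set U : Set (Euc N) := {x | e x < a} with hU
  have hUopen : IsOpen U := isOpen_lt hecont continuous_const
  have hUV : ∀ x, x ∈ U ∨ x ∈ Ω := by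
    intro x
    by_cases hx : x ∈ Ω
    · exact Or.inr hx
    · left; simp only [hU, mem_setOf_eq, he0 x hx]; exact ha
  -- test functions
  set φ : Euc N → ℝ := fun x => sg a (e x) ^ p * (w x + a) ^ (1 - p) with hφ
  set ψ : Euc N → ℝ := fun x => sg a (e x) with hψ
  have hce : ContDiffOn ℝ 1 e Ω := hereg.mono subset_closure
  have hcw : ContDiffOn ℝ 1 w Ω := hwreg.mono subset_closure
  have hφΩ : ContDiffOn ℝ 1 φ Ω := by
    have h1 : ContDiffOn ℝ 1 (fun x => sg a (e x) ^ p) Ω :=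
      (rho_contDiff hp ha).comp_contDiffOn hce
    have h2 : ContDiffOn ℝ 1 (fun x => (w x + a) ^ (1 - p)) Ω :=
      (hcw.add contDiffOn_const).rpow_const_of_ne (fun x hx => by
        have := hwpos x hx; positivity)
    exact h1.mul h2
  have hφ0 : ∀ x ∈ U, φ x = 0 := by
    intro x hx
    simp only [hU, mem_setOf_eq] at hx
    simp only [hφ]
    rw [sg_zero ha hx.le, Real.zero_rpow (by positivity), zero_mul]
  have hφC1 : ContDiff ℝ 1 φ := contDiff_glue hUopen hΩo hUV hφ0 hφΩ
  have hφsupp : Function.support φ ⊆ K := by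
    intro x hx
    by_contra hxn
    simp only [hK, mem_setOf_eq, not_le] at hxn
    exact hx (hφ0 x hxn)
  have htφ : tsupport φ ⊆ K := closure_minimal hφsupp hKcl
  have hφcomp : HasCompactSupport φ :=
    HasCompactSupport.of_support_subset_isCompact hKcomp hφsupp
  have hψ0 : ∀ x ∈ U, ψ x = 0 := by
    intro x hx
    simp only [hU, mem_setOf_eq] at hx
    simp only [hψ]
    exact sg_zero ha hx.le
  have hψΩ : ContDiffOn ℝ 1 ψ Ω := (sg_contDiff a).comp_contDiffOn hce
  have hψC1 : ContDiff ℝ 1 ψ := contDiff_glue hUopen hΩo hUV hψ0 hψΩ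
  have hψsupp : Function.support ψ ⊆ K := by
    intro x hx
    by_contra hxn
    simp only [hK, mem_setOf_eq, not_le] at hxn
    exact hx (hψ0 x hxn)
  have htψ : tsupport ψ ⊆ K := closure_minimal hψsupp hKcl
  have hψcomp : HasCompactSupport ψ :=
    HasCompactSupport.of_support_subset_isCompact hKcomp hψsupp
  -- apply the weak formulations
  have happly_w := hwsol φ hφC1 hφcomp (htφ.trans hKΩ)
  have happly_e := hesol ψ hψC1 hψcomp (htψ.trans hKΩ)
  -- differentiability on Ω
  have hediff : ∀ x ∈ Ω, HasFDerivAt e (fderiv ℝ e x) x := by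
    intro x hx
    have h1 : closure Ω ∈ nhds x := mem_of_superset (hΩo.mem_nhds hx) subset_closure
    exact ((hereg.contDiffAt h1).differentiableAt one_ne_zero).hasFDerivAt
  have hwdiff : ∀ x ∈ Ω, HasFDerivAt w (fderiv ℝ w x) x := by
    intro x hx
    have h1 : closure Ω ∈ nhds x := mem_of_superset (hΩo.mem_nhds hx) subset_closure
    exact ((hwreg.contDiffAt h1).differentiableAt one_ne_zero).hasFDerivAt
  -- continuity of gradients on Ω
  have hgradeCont : ContinuousOn (fun x => gradient e x) Ω := by
    have h1 : ContinuousOn (fderiv ℝ e) Ω := hce.continuousOn_fderiv_of_isOpen hΩo le_rfl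
    exact ((InnerProductSpace.toDual ℝ (Euc N)).symm.continuous.comp_continuousOn h1)
  have hgradwCont : ContinuousOn (fun x => gradient w x) Ω := by
    have h1 : ContinuousOn (fderiv ℝ w) Ω := hcw.continuousOn_fderiv_of_isOpen hΩo le_rfl
    exact ((InnerProductSpace.toDual ℝ (Euc N)).symm.continuous.comp_continuousOn h1)
  have hgradφCont : Continuous (fun x => gradient φ x) :=
    (InnerProductSpace.toDual ℝ (Euc N)).symm.continuous.comp
      (hφC1.continuous_fderiv one_ne_zero)
  -- pointwise identity for the φ-integrand
  have hFw_le : ∀ x ∈ Ω,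
      ‖gradient w x‖ ^ (p - 2) * (inner ℝ (gradient w x) (gradient φ x) : ℝ) ≤
        th a (e x) * ‖gradient e x‖ ^ p := by
    intro x hx
    have hde := hediff x hx
    have hdw := hwdiff x hx
    have hGpos : 0 < w x + a := by have := hwpos x hx; positivity
    have hρd : HasFDerivAt (fun y => sg a (e y) ^ p)
        ((p * sg a (e x) ^ (p - 1) * th a (e x)) • fderiv ℝ e x) x :=
      (rho_hasDerivAt hp ha (e x)).comp_hasFDerivAt x hde
    have hgd : HasFDerivAt (fun y => (w y + a) ^ (1 - p))
        (((1 - p) * (w x + a) ^ (-p)) • fderiv ℝ w x) x := by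
      have hb : HasDerivAt (fun t : ℝ => (t + a) ^ (1 - p))
          ((1 - p) * (w x + a) ^ (1 - p - 1) * 1) (w x) :=
        by have := (Real.hasDerivAt_rpow_const (x := w x + a) (p := 1 - p)
            (Or.inl hGpos.ne')).comp (w x) ((hasDerivAt_id (w x)).add_const a); exact this
      have hb' : HasDerivAt (fun t : ℝ => (t + a) ^ (1 - p))
          ((1 - p) * (w x + a) ^ (-p)) (w x) := by
        convert hb using 1
        rw [mul_one]
        congr 1
        ring
      exact hb'.comp_hasFDerivAt x hdw
    have hφd : HasFDerivAt φ
        ((sg a (e x) ^ p) • (((1 - p) * (w x + a) ^ (-p)) • fderiv ℝ w x)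
          + ((w x + a) ^ (1 - p)) • ((p * sg a (e x) ^ (p - 1) * th a (e x)) • fderiv ℝ e x))
        x := hρd.mul hgd
    have hfdφ := hφd.fderiv
    have hinner : (inner ℝ (gradient w x) (gradient φ x) : ℝ) =
        sg a (e x) ^ p * ((1 - p) * (w x + a) ^ (-p)
            * (inner ℝ (gradient w x) (gradient w x) : ℝ))
          + (w x + a) ^ (1 - p) * ((p * sg a (e x) ^ (p - 1) * th a (e x))
            * (inner ℝ (gradient e x) (gradient w x) : ℝ)) := by
      rw [real_inner_comm, inner_grad, hfdφ]
      simp only [ContinuousLinearMap.add_apply, ContinuousLinearMap.coe_smul',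
        Pi.smul_apply, smul_eq_mul]
      rw [← inner_grad, ← inner_grad]
    rw [hinner, real_inner_self_eq_norm_sq]
    have hyoung := young_picone (ip := (inner ℝ (gradient e x) (gradient w x) : ℝ)) hp
      (sg_nonneg ha (e x)) (th_nonneg a (e x)) (th_le_one a (e x)) hGpos
      (norm_nonneg (gradient e x)) (norm_nonneg (gradient w x))
      (abs_real_inner_le_norm _ _)
    calc ‖gradient w x‖ ^ (p - 2) * (sg a (e x) ^ p * ((1 - p) * (w x + a) ^ (-p)
            * ‖gradient w x‖ ^ (2:ℕ))
          + (w x + a) ^ (1 - p) * ((p * sg a (e x) ^ (p - 1) * th a (e x))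
            * (inner ℝ (gradient e x) (gradient w x) : ℝ)))
        = ‖gradient w x‖ ^ (p - 2) * (sg a (e x) ^ p * ((1 - p) * (w x + a) ^ (-p))
            * ‖gradient w x‖ ^ (2:ℕ)
          + (w x + a) ^ (1 - p) * (p * sg a (e x) ^ (p - 1) * th a (e x))
            * (inner ℝ (gradient e x) (gradient w x) : ℝ)) := by ring
      _ ≤ th a (e x) * ‖gradient e x‖ ^ p := hyoung
  -- pointwise identity for the ψ-integrand
  have hFe_eq : ∀ x ∈ Ω,
      ‖gradient e x‖ ^ (p - 2) * (inner ℝ (gradient e x) (gradient ψ x) : ℝ) =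
        th a (e x) * ‖gradient e x‖ ^ p := by
    intro x hx
    have hde := hediff x hx
    have hψd : HasFDerivAt ψ (th a (e x) • fderiv ℝ e x) x :=
      (sg_hasDerivAt a (e x)).comp_hasFDerivAt x hde
    have hfdψ := hψd.fderiv
    have h1 : (inner ℝ (gradient e x) (gradient ψ x) : ℝ) =
        th a (e x) * (inner ℝ (gradient e x) (gradient e x) : ℝ) := by
      rw [real_inner_comm, inner_grad, hfdψ]
      simp only [ContinuousLinearMap.coe_smul', Pi.smul_apply, smul_eq_mul]
      rw [← inner_grad]
    rw [h1, real_inner_self_eq_norm_sq]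
    rcases eq_or_lt_of_le (norm_nonneg (gradient e x)) with h0 | h0
    · rw [← h0]
      rw [Real.zero_rpow (by positivity : p ≠ 0)]
      norm_num
    · have h2 : ‖gradient e x‖ ^ (p - 2) * ‖gradient e x‖ ^ (2:ℕ)
          = ‖gradient e x‖ ^ p := by
        rw [← Real.rpow_natCast ‖gradient e x‖ 2, ← Real.rpow_add h0]
        norm_num
      rw [mul_left_comm, h2]
  -- integrability facts
  have IntFe : IntegrableOn (fun x => th a (e x) * ‖gradient e x‖ ^ p) Ω volume := by
    set f : Euc N → ℝ := fun x => th a (e x) * ‖gradient e x‖ ^ p with hf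
    have hcontΩ : ContinuousOn f Ω := by
      refine ContinuousOn.mul (((th_cont a).comp hecont).continuousOn) ?_
      exact (hgradeCont.norm).rpow_const (fun x hx => Or.inr (by positivity))
    have hf0 : ∀ x ∈ U, f x = 0 := by
      intro x hx
      simp only [hU, mem_setOf_eq] at hx
      simp only [hf]
      rw [th_zero ha hx.le, zero_mul]
    have hfcont : Continuous f := continuous_glue hUopen hΩo hUV hf0 hcontΩ
    have hfsupp : Function.support f ⊆ K := by
      intro x hx
      by_contra hxn
      simp only [hK, mem_setOf_eq, not_le] at hxn
      exact hx (hf0 x hxn)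
    have hfc : HasCompactSupport f :=
      HasCompactSupport.of_support_subset_isCompact hKcomp hfsupp
    exact (hfcont.integrable_of_hasCompactSupport hfc).integrableOn
  have IntFw : IntegrableOn (fun x =>
      ‖gradient w x‖ ^ (p - 2) * (inner ℝ (gradient w x) (gradient φ x) : ℝ)) Ω volume := by
    have hg1 : AEMeasurable (fun x => gradient w x) (volume.restrict Ω) :=
      hgradwCont.aemeasurable hΩo.measurableSet
    have hm1 : AEMeasurable (fun x => ‖gradient w x‖ ^ (p - 2)) (volume.restrict Ω) :=
      (measurable_rpow_const (p - 2)).comp_aemeasurable hg1.norm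
    have hm2 : AEMeasurable (fun x => (inner ℝ (gradient w x) (gradient φ x) : ℝ))
        (volume.restrict Ω) := hg1.inner hgradφCont.aemeasurable
    have hmeas := (hm1.mul hm2).aestronglyMeasurable
    obtain ⟨Cw, hCw⟩ := hKcomp.exists_bound_of_continuousOn (hgradwCont.mono hKΩ)
    obtain ⟨Cφ, hCφ⟩ := hKcomp.exists_bound_of_continuousOn hgradφCont.continuousOn
    set C : ℝ := max Cw 0 ^ (p - 1) * max Cφ 0 with hC
    have hC0 : 0 ≤ C := mul_nonneg (Real.rpow_nonneg (le_max_right _ _) _) (le_max_right _ _)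
    have hbd : ∀ x ∈ Ω,
        |‖gradient w x‖ ^ (p - 2) * (inner ℝ (gradient w x) (gradient φ x) : ℝ)| ≤ C := by
      intro x hx
      by_cases hxs : x ∈ tsupport φ
      · have hxK := htφ hxs
        by_cases hwz : gradient w x = 0
        · rw [hwz]
          simp only [inner_zero_left, mul_zero, abs_zero]
          exact hC0
        · have hWpos : 0 < ‖gradient w x‖ := norm_pos_iff.mpr hwz
          rw [abs_mul, abs_of_nonneg (Real.rpow_nonneg (norm_nonneg _) _)]
          have hip : |(inner ℝ (gradient w x) (gradient φ x) : ℝ)| ≤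
              ‖gradient w x‖ * ‖gradient φ x‖ := abs_real_inner_le_norm _ _
          calc ‖gradient w x‖ ^ (p - 2) * |(inner ℝ (gradient w x) (gradient φ x) : ℝ)|
              ≤ ‖gradient w x‖ ^ (p - 2) * (‖gradient w x‖ * ‖gradient φ x‖) :=
                mul_le_mul_of_nonneg_left hip (Real.rpow_nonneg (norm_nonneg _) _)
            _ = ‖gradient w x‖ ^ (p - 1) * ‖gradient φ x‖ := by
                rw [← mul_assoc]
                congr 1
                nth_rewrite 2 [← Real.rpow_one ‖gradient w x‖]
                rw [← Real.rpow_add hWpos]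
                congr 1
                ring
            _ ≤ max Cw 0 ^ (p - 1) * max Cφ 0 := by
                refine mul_le_mul ?_ ?_ (norm_nonneg _) (Real.rpow_nonneg (le_max_right _ _) _)
                · exact Real.rpow_le_rpow (norm_nonneg _)
                    ((hCw x hxK).trans (le_max_left _ _)) (by linarith)
                · exact (hCφ x hxK).trans (le_max_left _ _)
      · have hz : gradient φ x = 0 := gradient_zero_of_nmem_tsupport hxs
        rw [hz]
        simp only [inner_zero_right, mul_zero, abs_zero]
        exact hC0
    have hvol : volume Ω < ⊤ := hΩb.measure_lt_top
    refine Integrable.mono' (g := fun _ => C) (integrableOn_const hvol.ne)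
      hmeas ?_
    exact (ae_restrict_iff' hΩo.measurableSet).2 (ae_of_all _ (fun x hx => by
      rw [Real.norm_eq_abs]
      exact hbd x hx))
  -- chain of inequalities
  have step1 : (∫ x in Ω, w x ^ (q - 1) * φ x) ≤
      ∫ x in Ω, th a (e x) * ‖gradient e x‖ ^ p := by
    rw [← happly_w]
    exact setIntegral_mono_on IntFw IntFe hΩo.measurableSet hFw_le
  have step2 : (∫ x in Ω, th a (e x) * ‖gradient e x‖ ^ p) =
      ∫ x in Ω, (lam0 * e x ^ (p - 1)) * ψ x := by
    rw [← happly_e]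
    exact (setIntegral_congr_fun hΩo.measurableSet hFe_eq).symm
  have step3 : (∫ x in Ω, (lam0 * e x ^ (p - 1)) * ψ x) ≤ lam0 * ∫ x in Ω, e x ^ p := by
    have hclos : IsCompact (closure Ω) :=
      Metric.isCompact_of_isClosed_isBounded isClosed_closure hΩb.closure
    obtain ⟨Ce, hCe⟩ := hclos.exists_bound_of_continuousOn hereg.continuousOn
    set Ce' : ℝ := max Ce 0 with hCe'
    have heb : ∀ x ∈ Ω, e x ≤ Ce' := by
      intro x hx
      have := hCe x (subset_closure hx)
      rw [Real.norm_eq_abs, abs_of_nonneg (henn x)] at this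
      exact this.trans (le_max_left _ _)
    have hCe'0 : 0 ≤ Ce' := le_max_right _ _
    have hint1 : IntegrableOn (fun x => e x ^ p) Ω volume := by
      refine integrableOn_of_bdd hΩo hΩb (hecont.rpow_const (fun x => Or.inr (by positivity)))
        (C := Ce' ^ p) ?_
      intro x hx
      rw [abs_of_nonneg (Real.rpow_nonneg (henn x) _)]
      exact Real.rpow_le_rpow (henn x) (heb x hx) (by positivity)
    have hint2 : IntegrableOn (fun x => e x ^ (p - 1) * ψ x) Ω volume := by
      refine integrableOn_of_bdd hΩo hΩb ?_ (C := Ce' ^ (p - 1) * Ce') ?_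
      · exact (hecont.rpow_const (fun x => Or.inr (by linarith))).mul
          ((sg_contDiff a).continuous.comp hecont)
      · intro x hx
        have hψnn : 0 ≤ ψ x := sg_nonneg ha (e x)
        have hψle : ψ x ≤ e x := (sg_le_max ha (e x)).trans_eq (max_eq_left (hepos x hx).le)
        rw [abs_mul, abs_of_nonneg (Real.rpow_nonneg (henn x) _), abs_of_nonneg hψnn]
        refine mul_le_mul ?_ (hψle.trans (heb x hx)) hψnn (Real.rpow_nonneg hCe'0 _)
        exact Real.rpow_le_rpow (henn x) (heb x hx) (by linarith)
    have heq : (∫ x in Ω, (lam0 * e x ^ (p - 1)) * ψ x)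
        = lam0 * ∫ x in Ω, e x ^ (p - 1) * ψ x := by
      simp_rw [mul_assoc]
      exact integral_const_mul lam0 _
    rw [heq]
    refine mul_le_mul_of_nonneg_left ?_ hlam0
    refine setIntegral_mono_on hint2 hint1 hΩo.measurableSet ?_
    intro x hx
    have hψle : ψ x ≤ e x := (sg_le_max ha (e x)).trans_eq (max_eq_left (hepos x hx).le)
    have h2 : 0 ≤ e x ^ (p - 1) := Real.rpow_nonneg (henn x) _
    calc e x ^ (p - 1) * ψ x ≤ e x ^ (p - 1) * e x := mul_le_mul_of_nonneg_left hψle h2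
      _ = e x ^ p := by
        nth_rewrite 2 [← Real.rpow_one (e x)]
        rw [← Real.rpow_add (hepos x hx)]
        congr 1
        ring
  calc (∫ x in Ω, w x ^ (q - 1) * (sg a (e x) ^ p * (w x + a) ^ (1 - p)))
      = ∫ x in Ω, w x ^ (q - 1) * φ x := rfl
    _ ≤ ∫ x in Ω, th a (e x) * ‖gradient e x‖ ^ p := step1
    _ = ∫ x in Ω, (lam0 * e x ^ (p - 1)) * ψ x := step2
    _ ≤ lam0 * ∫ x in Ω, e x ^ p := step3

end Stmt17Aux

open Stmt17Aux in
/-- Picone-type energy comparison between a positive Lane-Emden solution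
and the normalized first eigenfunction. -/
theorem stmt17 {N : ℕ} (hN : 2 ≤ N) (Ω : Set (Euc N)) (hΩo : IsOpen Ω)
    (hΩb : Bornology.IsBounded Ω) (hΩne : Ω.Nonempty)
    (p q : ℝ) (hp : 1 < p) (hpN : p < N) (hpq : p < q) (hq : q < N * p / (N - p))
    (w : Euc N → ℝ) (hwreg : ContDiffOn ℝ 1 w (closure Ω))
    (hw0 : ∀ x ∉ Ω, w x = 0) (hwpos : ∀ x ∈ Ω, 0 < w x)
    (hwsol : IsWeakSol Ω p (fun t => t ^ (q - 1)) w)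
    (e : Euc N → ℝ) (hereg : ContDiffOn ℝ 1 e (closure Ω))
    (he0 : ∀ x ∉ Ω, e x = 0) (hepos : ∀ x ∈ Ω, 0 < e x)
    (henorm : supn Ω e = 1)
    (hesol : IsWeakSol Ω p (fun t => lam Ω p p * t ^ (p - 1)) e) :
    (∫ x in Ω, w x ^ (q - p) * e x ^ p) ≤ lam Ω p p * ∫ x in Ω, e x ^ p ∧
      supn Ω w ^ (q - p) * ∫ x in Ω, (w x / supn Ω w) ^ (q - p) * e x ^ p ≤
        lam Ω p p * ∫ x in Ω, e x ^ p := by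
  have hlam0 : 0 ≤ lam Ω p p := by
    refine Real.sInf_nonneg ?_
    rintro r ⟨u, -, -, -, -, rfl⟩
    exact integral_nonneg (fun x => Real.rpow_nonneg (norm_nonneg _) _)
  have hecont : Continuous e := continuous_of_closure hΩo hereg.continuousOn he0
  have hwcont : Continuous w := continuous_of_closure hΩo hwreg.continuousOn hw0
  have hwnn : ∀ x, 0 ≤ w x := by
    intro x; by_cases hx : x ∈ Ω
    · exact (hwpos x hx).le
    · rw [hw0 x hx]
  have henn : ∀ x, 0 ≤ e x := by
    intro x; by_cases hx : x ∈ Ω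
    · exact (hepos x hx).le
    · rw [he0 x hx]
  have hclos : IsCompact (closure Ω) :=
    Metric.isCompact_of_isClosed_isBounded isClosed_closure hΩb.closure
  -- bound for w
  obtain ⟨Cw, hCw⟩ := hclos.exists_bound_of_continuousOn hwreg.continuousOn
  set W' : ℝ := max Cw 1 with hW'
  have hW1 : (1:ℝ) ≤ W' := le_max_right _ _
  have hwle : ∀ x ∈ Ω, w x ≤ W' := by
    intro x hx
    have := hCw x (subset_closure hx)
    rw [Real.norm_eq_abs, abs_of_nonneg (hwnn x)] at this
    exact this.trans (le_max_left _ _)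
  -- e is bounded by 1 on Ω
  have hbddE : BddAbove (e '' Ω) := by
    refine (hclos.image_of_continuousOn hereg.continuousOn).bddAbove.mono ?_
    exact image_mono subset_closure
  have hele : ∀ x ∈ Ω, e x ≤ 1 := by
    intro x hx
    have : e x ≤ supn Ω e := le_csSup hbddE ⟨x, hx, rfl⟩
    rwa [henorm] at this
  -- the sequence of parameters
  set aseq : ℕ → ℝ := fun n => 1 / (n + 1) with haseq
  have ha_pos : ∀ n : ℕ, 0 < aseq n := fun n => by positivity
  have ha_lim : Tendsto aseq atTop (𝓝 0) := tendsto_one_div_add_atTop_nhds_zero_nat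
  -- the main estimate for every n
  have hmain : ∀ n : ℕ,
      (∫ x in Ω, w x ^ (q - 1) * (sg (aseq n) (e x) ^ p * (w x + aseq n) ^ (1 - p))) ≤
        lam Ω p p * ∫ x in Ω, e x ^ p := fun n =>
    key_estimate hΩo hΩb hp hpq (ha_pos n) hlam0 hwreg hw0 hwpos hwsol
      hereg he0 hepos hesol
  -- dominated convergence
  have hlim : Tendsto
      (fun n : ℕ => ∫ x in Ω,
        w x ^ (q - 1) * (sg (aseq n) (e x) ^ p * (w x + aseq n) ^ (1 - p)))
      atTop (𝓝 (∫ x in Ω, w x ^ (q - p) * e x ^ p)) := by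
    refine tendsto_integral_of_dominated_convergence (fun _ => W' ^ (q - p)) ?_ ?_ ?_ ?_
    · -- measurability
      intro n
      refine Continuous.aestronglyMeasurable ?_ |>.restrict
      refine (hwcont.rpow_const (fun x => Or.inr (by linarith))).mul ?_
      refine Continuous.mul ?_ ?_
      · exact (((sg_contDiff (aseq n)).continuous).comp hecont).rpow_const
          (fun x => Or.inr (by positivity))
      · refine (hwcont.add continuous_const).rpow_const (fun x => Or.inl ?_)
        have h1 := hwnn x
        have h2 := ha_pos n
        exact (add_pos_of_nonneg_of_pos h1 h2).ne'
    · exact integrableOn_const hΩb.measure_lt_top.ne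
    · -- uniform bound
      intro n
      refine (ae_restrict_iff' hΩo.measurableSet).2 (ae_of_all _ (fun x hx => ?_))
      have hwx := hwpos x hx
      have han := ha_pos n
      have hA0 : 0 ≤ sg (aseq n) (e x) ^ p := Real.rpow_nonneg (sg_nonneg han _) _
      have hB0 : 0 ≤ (w x + aseq n) ^ (1 - p) := Real.rpow_nonneg (by positivity) _
      have hA1 : sg (aseq n) (e x) ^ p ≤ 1 := by
        refine Real.rpow_le_one (sg_nonneg han _) ?_ (by positivity)
        exact ((sg_le_max han (e x)).trans_eq (max_eq_left (hepos x hx).le)).trans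
          (hele x hx)
      have hB1 : (w x + aseq n) ^ (1 - p) ≤ w x ^ (1 - p) :=
        Real.rpow_le_rpow_of_nonpos hwx (by linarith) (by linarith)
      have hF0 : 0 ≤ w x ^ (q - 1) := Real.rpow_nonneg (hwnn x) _
      rw [Real.norm_eq_abs, abs_of_nonneg (mul_nonneg hF0 (mul_nonneg hA0 hB0))]
      calc w x ^ (q - 1) * (sg (aseq n) (e x) ^ p * (w x + aseq n) ^ (1 - p))
          ≤ w x ^ (q - 1) * (1 * w x ^ (1 - p)) := by
            refine mul_le_mul_of_nonneg_left ?_ hF0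
            exact mul_le_mul hA1 hB1 hB0 zero_le_one
        _ = w x ^ (q - p) := by
            rw [one_mul, ← Real.rpow_add hwx]
            congr 1
            ring
        _ ≤ W' ^ (q - p) :=
            Real.rpow_le_rpow (hwnn x) (hwle x hx) (by linarith)
    · -- pointwise convergence
      refine (ae_restrict_iff' hΩo.measurableSet).2 (ae_of_all _ (fun x hx => ?_))
      have hwx := hwpos x hx
      have hex := hepos x hx
      have h1 : Tendsto (fun n => sg (aseq n) (e x)) atTop (𝓝 (e x)) := by
        have hlow : Tendsto (fun n => e x - 2 * aseq n) atTop (𝓝 (e x)) := by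
          have := tendsto_const_nhds (x := e x) (f := atTop (α := ℕ)) |>.sub
            (ha_lim.const_mul 2)
          simpa only [mul_zero, sub_zero] using this
        refine tendsto_of_tendsto_of_tendsto_of_le_of_le hlow tendsto_const_nhds ?_ ?_
        · exact fun n => sg_ge (ha_pos n) (e x)
        · exact fun n => (sg_le_max (ha_pos n) (e x)).trans_eq (max_eq_left hex.le)
      have h2 : Tendsto (fun n => sg (aseq n) (e x) ^ p) atTop (𝓝 (e x ^ p)) :=
        ((Real.continuousAt_rpow_const (e x) p (Or.inl hex.ne')).tendsto).comp h1
      have h3 : Tendsto (fun n => (w x + aseq n) ^ (1 - p)) atTop (𝓝 (w x ^ (1 - p))) := by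
        have hadd : Tendsto (fun n => w x + aseq n) atTop (𝓝 (w x)) := by
          have := tendsto_const_nhds (x := w x) (f := atTop (α := ℕ)) |>.add ha_lim
          simpa only [add_zero] using this
        exact ((Real.continuousAt_rpow_const (w x) (1 - p) (Or.inl hwx.ne')).tendsto).comp
          hadd
      have hkey : w x ^ (q - 1) * (e x ^ p * w x ^ (1 - p)) = w x ^ (q - p) * e x ^ p := by
        rw [show q - p = (q - 1) + (1 - p) by ring, Real.rpow_add hwx]
        ring
      rw [← hkey]
      exact tendsto_const_nhds.mul (h2.mul h3)
  have goal1 : (∫ x in Ω, w x ^ (q - p) * e x ^ p) ≤ lam Ω p p * ∫ x in Ω, e x ^ p :=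
    le_of_tendsto hlim (Filter.Eventually.of_forall hmain)
  refine ⟨goal1, ?_⟩
  -- second form
  have hbddW : BddAbove (w '' Ω) := by
    refine ⟨W', ?_⟩
    rintro y ⟨x, hx, rfl⟩
    exact hwle x hx
  obtain ⟨x₀, hx₀⟩ := hΩne
  have hMw_pos : 0 < supn Ω w :=
    (hwpos x₀ hx₀).trans_le (le_csSup hbddW ⟨x₀, hx₀, rfl⟩)
  have hMne : supn Ω w ^ (q - p) ≠ 0 := (Real.rpow_pos_of_pos hMw_pos _).ne'
  have hcongr : EqOn (fun x => (w x / supn Ω w) ^ (q - p) * e x ^ p)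
      (fun x => (supn Ω w ^ (q - p))⁻¹ * (w x ^ (q - p) * e x ^ p)) Ω := by
    intro x hx
    simp only
    rw [Real.div_rpow (hwnn x) hMw_pos.le, div_eq_mul_inv]
    ring
  rw [setIntegral_congr_fun hΩo.measurableSet hcongr, integral_const_mul, ← mul_assoc,
    mul_inv_cancel₀ hMne, one_mul]
  exact goal1
end
end
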